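/- For every finite simple graph G on n vertices and every natural number k, the number of proper colourings of G using colours from a set of size k equals Σ_{i=0}^{n} a_i(G) · k(k−1)⋯(k−i+1), where k(k−1)⋯(k−i+1) is the falling factorial. -/

import Mathlib

open Finset

/-- `sigmaCoeff G i` is the number of `i`-colour partitions of `G`, i.e. the number of
partitions of the vertex set of `G` into `i` nonempty independent sets. -/
noncomputable def sigmaCoeff {V : Type} [Fintype V] [DecidableEq V]
    (G : SimpleGraph V) (i : ℕ) : ℕ :=
  Nat.card {F : Finset (Finset V) // F.card = i ∧
    (∀ p ∈ F, p.Nonempty) ∧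
    (∀ p ∈ F, ∀ q ∈ F, p ≠ q → Disjoint p q) ∧
    F.sup id = Finset.univ ∧
    (∀ p ∈ F, ∀ u ∈ p, ∀ v ∈ p, ¬ G.Adj u v)}

namespace ChromAux

open scoped Classical

variable {V : Type} [Fintype V] [DecidableEq V]

/-- Predicate: `F` is a partition of `V` into nonempty independent sets of `G`. -/
def Good (G : SimpleGraph V) (F : Finset (Finset V)) : Prop :=
  (∀ p ∈ F, p.Nonempty) ∧
  (∀ p ∈ F, ∀ q ∈ F, p ≠ q → Disjoint p q) ∧
  F.sup id = Finset.univ ∧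
  (∀ p ∈ F, ∀ u ∈ p, ∀ v ∈ p, ¬ G.Adj u v)

/-- The set of nonempty fibers of a colouring. -/
noncomputable def fibers {k : ℕ} (f : V → Fin k) : Finset (Finset V) :=
  (univ : Finset V).image (fun v => univ.filter (fun u => f u = f v))

lemma mem_fibers {k : ℕ} (f : V → Fin k) (p : Finset V) :
    p ∈ fibers f ↔ ∃ v, p = univ.filter (fun u => f u = f v) := by
  simp [fibers, eq_comm]

lemma existsUnique_part {G : SimpleGraph V} {F : Finset (Finset V)} (hF : Good G F)
    (v : V) : ∃! p, p ∈ F ∧ v ∈ p := by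
  have hv : v ∈ F.sup id := by rw [hF.2.2.1]; exact mem_univ v
  rw [Finset.mem_sup] at hv
  obtain ⟨p, hpF, hvp⟩ := hv
  refine ⟨p, ⟨hpF, hvp⟩, ?_⟩
  rintro q ⟨hqF, hvq⟩
  by_contra hne
  exact (Finset.disjoint_left.mp (hF.2.1 q hqF p hpF hne)) hvq hvp

/-- The part of `F` containing `v`. -/
noncomputable def partOf {G : SimpleGraph V} {F : Finset (Finset V)} (hF : Good G F)
    (v : V) : Finset V :=
  (existsUnique_part hF v).choose

lemma partOf_mem {G : SimpleGraph V} {F : Finset (Finset V)} (hF : Good G F) (v : V) :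
    partOf hF v ∈ F := (existsUnique_part hF v).choose_spec.1.1

lemma mem_partOf {G : SimpleGraph V} {F : Finset (Finset V)} (hF : Good G F) (v : V) :
    v ∈ partOf hF v := (existsUnique_part hF v).choose_spec.1.2

lemma partOf_eq {G : SimpleGraph V} {F : Finset (Finset V)} (hF : Good G F) {v : V}
    {p : Finset V} (hp : p ∈ F) (hvp : v ∈ p) : partOf hF v = p := by
  have h := (existsUnique_part hF v).choose_spec.2
  exact ((h p ⟨hp, hvp⟩).symm).symm ▸ rfl

/-- In a fiber, all vertices get the same colour. -/
lemma fiber_const {k : ℕ} {f : V → Fin k} {p : Finset V} (hp : p ∈ fibers f)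
    {x y : V} (hx : x ∈ p) (hy : y ∈ p) : f x = f y := by
  rw [mem_fibers] at hp
  obtain ⟨v, rfl⟩ := hp
  simp only [mem_filter] at hx hy
  rw [hx.2, hy.2]

lemma fibers_good {G : SimpleGraph V} {k : ℕ} {f : V → Fin k}
    (hf : ∀ u v : V, G.Adj u v → f u ≠ f v) : Good G (fibers f) := by
  refine ⟨?_, ?_, ?_, ?_⟩
  · intro p hp
    rw [mem_fibers] at hp
    obtain ⟨v, rfl⟩ := hp
    exact ⟨v, by simp⟩
  · intro p hp q hq hne
    rw [mem_fibers] at hp hq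
    obtain ⟨v, rfl⟩ := hp
    obtain ⟨w, rfl⟩ := hq
    rw [Finset.disjoint_left]
    intro a ha hb
    simp only [mem_filter] at ha hb
    exact hne (by simp [← ha.2, ← hb.2])
  · apply Finset.Subset.antisymm (Finset.subset_univ _)
    intro v _
    rw [Finset.mem_sup]
    exact ⟨univ.filter (fun u => f u = f v), (mem_fibers f _).mpr ⟨v, rfl⟩, by simp⟩
  · intro p hp u hu v hv hadj
    exact hf u v hadj (fiber_const hp hu hv)

lemma proper_of_fibers_good {G : SimpleGraph V} {k : ℕ} {f : V → Fin k}
    (h : Good G (fibers f)) : ∀ u v : V, G.Adj u v → f u ≠ f v := by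
  intro u v hadj heq
  have hp : (univ.filter (fun x => f x = f v)) ∈ fibers f := (mem_fibers f _).mpr ⟨v, rfl⟩
  exact h.2.2.2 _ hp u (by simp [heq]) v (by simp) hadj

/-- The colourings with fiber partition `F` correspond to injections `F ↪ Fin k`. -/
noncomputable def equivEmb (G : SimpleGraph V) (F : Finset (Finset V)) (hF : Good G F)
    (k : ℕ) : {f : V → Fin k // fibers f = F} ≃ ({p // p ∈ F} ↪ Fin k) where
  toFun f :=
    ⟨fun p => f.1 (hF.1 p.1 p.2).choose, by
      rintro ⟨p, hp⟩ ⟨q, hq⟩ h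
      have hp' : p ∈ fibers f.1 := by rw [f.2]; exact hp
      have hq' : q ∈ fibers f.1 := by rw [f.2]; exact hq
      rw [mem_fibers] at hp' hq'
      obtain ⟨v, hv⟩ := hp'
      obtain ⟨w, hw⟩ := hq'
      have hxp : (hF.1 p hp).choose ∈ p := (hF.1 p hp).choose_spec
      have hxq : (hF.1 q hq).choose ∈ q := (hF.1 q hq).choose_spec
      have hxp' : (hF.1 p hp).choose ∈ univ.filter (fun u => f.1 u = f.1 v) := by
        rw [← hv]; exact hxp
      have hxq' : (hF.1 q hq).choose ∈ univ.filter (fun u => f.1 u = f.1 w) := by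
        rw [← hw]; exact hxq
      have h1 : f.1 (hF.1 p hp).choose = f.1 v := (mem_filter.mp hxp').2
      have h2 : f.1 (hF.1 q hq).choose = f.1 w := (mem_filter.mp hxq').2
      have h' : f.1 (hF.1 p hp).choose = f.1 (hF.1 q hq).choose := h
      have : f.1 v = f.1 w := by rw [← h1, ← h2, h']
      simp only [Subtype.mk.injEq]
      rw [hv, hw]
      ext u
      simp [this]⟩
  invFun e :=
    ⟨fun v => e ⟨partOf hF v, partOf_mem hF v⟩, by
      have key : ∀ u v : V,
          (e ⟨partOf hF u, partOf_mem hF u⟩ = e ⟨partOf hF v, partOf_mem hF v⟩) ↔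
          u ∈ partOf hF v := by
        intro u v
        constructor
        · intro h
          have := e.injective h
          have hpq : partOf hF u = partOf hF v := congrArg Subtype.val this
          exact hpq ▸ mem_partOf hF u
        · intro h
          have : partOf hF u = partOf hF v := partOf_eq hF (partOf_mem hF v) h
          congr 1
          exact Subtype.ext this
      apply Finset.Subset.antisymm
      · intro p hp
        rw [mem_fibers] at hp
        obtain ⟨v, rfl⟩ := hp
        have : univ.filter (fun u =>
            e ⟨partOf hF u, partOf_mem hF u⟩ = e ⟨partOf hF v, partOf_mem hF v⟩) =
            partOf hF v := by
          ext u
          simp only [mem_filter, mem_univ, true_and]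
          rw [key]
        rw [this]
        exact partOf_mem hF v
      · intro p hp
        obtain ⟨v, hv⟩ := hF.1 p hp
        rw [mem_fibers]
        refine ⟨v, ?_⟩
        have hpv : partOf hF v = p := partOf_eq hF hp hv
        ext u
        simp only [mem_filter, mem_univ, true_and]
        rw [key, hpv]⟩
  left_inv := by
    rintro ⟨f, hf⟩
    ext v
    simp only
    set p := partOf hF v with hp
    have hpF : p ∈ F := partOf_mem hF v
    have hx : (hF.1 p hpF).choose ∈ p := (hF.1 p hpF).choose_spec
    have hpfib : p ∈ fibers f := hf ▸ hpF
    exact congrArg Fin.val (fiber_const hpfib hx (mem_partOf hF v))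
  right_inv := by
    intro e
    ext ⟨p, hp⟩
    simp only
    have hx : (hF.1 p hp).choose ∈ p := (hF.1 p hp).choose_spec
    have : partOf hF (hF.1 p hp).choose = p := partOf_eq hF hp hx
    have h2 : (⟨partOf hF (hF.1 p hp).choose, partOf_mem hF _⟩ : {p // p ∈ F}) =
        ⟨p, hp⟩ := Subtype.ext this
    exact congrArg (fun x => (e x).val) h2

lemma card_colourings_fiber (G : SimpleGraph V) (F : Finset (Finset V)) (hF : Good G F)
    (k : ℕ) :
    Fintype.card {f : V → Fin k // fibers f = F} = Nat.descFactorial k F.card := by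
  rw [Fintype.card_congr (equivEmb G F hF k), Fintype.card_embedding_eq,
    Fintype.card_fin, Fintype.card_coe]

lemma card_le_of_good {G : SimpleGraph V} {F : Finset (Finset V)} (hF : Good G F) :
    F.card ≤ Fintype.card V := by
  have hdisj : (F : Set (Finset V)).PairwiseDisjoint id := by
    intro p hp q hq hne
    exact hF.2.1 p hp q hq hne
  have h1 : ∑ p ∈ F, (id p).card = (F.biUnion id).card :=
    (Finset.card_biUnion (fun p hp q hq hne => hF.2.1 p hp q hq hne)).symm
  have h2 : F.biUnion id = Finset.univ := by
    rw [← Finset.sup_eq_biUnion]; exact hF.2.2.1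
  calc F.card = ∑ _p ∈ F, 1 := by simp
    _ ≤ ∑ p ∈ F, (id p).card := by
        apply Finset.sum_le_sum
        intro p hp
        exact Finset.card_pos.mpr (hF.1 p hp)
    _ = Fintype.card V := by rw [h1, h2, Finset.card_univ]

end ChromAux

/-- For every finite simple graph `G` on `n` vertices and every natural `k`, the number
of proper colourings of `G` with colours from a set of size `k` equals
`Σ_{i=0}^{n} a_i(G) · k(k−1)⋯(k−i+1)`, where `k(k−1)⋯(k−i+1)` is the falling
factorial. -/
theorem chromatic_eq_sum_sigmaCoeff_descFactorial
    {V : Type} [Fintype V] [DecidableEq V] (G : SimpleGraph V) (k : ℕ) :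
    Nat.card {f : V → Fin k // ∀ u v : V, G.Adj u v → f u ≠ f v} =
      ∑ i ∈ Finset.range (Fintype.card V + 1),
        sigmaCoeff G i * Nat.descFactorial k i := by
  classical
  open ChromAux in
  -- The set of good partitions
  set S : Finset (Finset (Finset V)) :=
    Finset.univ.filter (fun F => ChromAux.Good G F) with hS
  -- sigmaCoeff as a filter card
  have hsigma : ∀ i, sigmaCoeff G i = (S.filter (fun F => F.card = i)).card := by
    intro i
    rw [sigmaCoeff, Nat.card_eq_fintype_card, Fintype.card_subtype]
    congr 1
    ext F
    simp only [hS, Finset.mem_filter, Finset.mem_univ, true_and, ChromAux.Good]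
    exact ⟨fun h => ⟨Finset.mem_filter.mpr ⟨Finset.mem_univ _, h.2⟩, h.1⟩,
      fun h => ⟨h.2, (Finset.mem_filter.mp h.1).2⟩⟩
  rw [Nat.card_eq_fintype_card, Fintype.card_subtype]
  have step1 :
      (Finset.univ.filter (fun f : V → Fin k => ∀ u v : V, G.Adj u v → f u ≠ f v)).card =
      ∑ F ∈ S, ((Finset.univ.filter (fun f : V → Fin k => ∀ u v : V, G.Adj u v → f u ≠ f v)).filter
        (fun f => ChromAux.fibers f = F)).card := by
    apply Finset.card_eq_sum_card_fiberwise
    intro f hf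
    simp only [Finset.mem_coe, Finset.mem_filter, Finset.mem_univ, true_and] at hf
    simp only [Finset.mem_coe, hS, Finset.mem_filter, Finset.mem_univ, true_and]
    exact ChromAux.fibers_good hf
  have step2 : ∀ F ∈ S,
      ((Finset.univ.filter (fun f : V → Fin k => ∀ u v : V, G.Adj u v → f u ≠ f v)).filter
        (fun f => ChromAux.fibers f = F)).card = Nat.descFactorial k F.card := by
    intro F hF
    simp only [hS, Finset.mem_filter, Finset.mem_univ, true_and] at hF
    rw [← ChromAux.card_colourings_fiber G F hF k, Fintype.card_subtype]
    congr 1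
    ext f
    simp only [Finset.mem_filter, Finset.mem_univ, true_and, and_iff_right_iff_imp]
    intro hfib
    exact ChromAux.proper_of_fibers_good (hfib ▸ hF)
  rw [step1, Finset.sum_congr rfl step2]
  -- now group by card
  rw [← Finset.sum_fiberwise_of_maps_to (g := fun F : Finset (Finset V) => F.card)
    (t := Finset.range (Fintype.card V + 1)) ?_ (fun F => Nat.descFactorial k F.card)]
  · apply Finset.sum_congr rfl
    intro i _
    rw [hsigma i]
    rw [Finset.sum_congr rfl (fun F hF => by
      rw [(Finset.mem_filter.mp hF).2]), Finset.sum_const, smul_eq_mul]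
  · intro F hF
    simp only [hS, Finset.mem_filter, Finset.mem_univ, true_and] at hF
    rw [Finset.mem_range, Nat.lt_succ_iff]
    exact ChromAux.card_le_of_good hF
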